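/- Let c>0 and k(v̂)=8c·v₂v₃·(v₂⁴+16v₃²)^{−3/2} for v̂≠(0,0). For every integer j ≥ 0 and every α∈[0,1) with j+α>0, there exists a constant C>0 such that for every x̂∈ℝ² and every r>0, ∫_{B̂_r(x̂)} |k(x̂−ŷ)|·d̃(x̂,ŷ)^{j+α} dŷ ≤ C·r^{j+α}. -/

import Mathlib

open MeasureTheory Filter

noncomputable section

/-- The quantity `D(x, ŷ)` from the double layer potential kernels. -/
def Dden (x : ℝ × ℝ × ℝ) (y : ℝ × ℝ) : ℝ :=
  (x.1 ^ 2 + (x.2.1 - y.1) ^ 2) ^ 2 + 16 * (x.2.2 - y.2 + (1 / 2) * y.1 * x.1) ^ 2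

/-- The kernel `k₁(x, ŷ)`. -/
def k1 (c : ℝ) (x : ℝ × ℝ × ℝ) (y : ℝ × ℝ) : ℝ :=
  2 * c * (x.1 ^ 2 + (x.2.1 - y.1) ^ 2) * x.1 * Dden x y ^ (-(3 : ℝ) / 2)

/-- The kernel `k(x, ŷ)`. -/
def kker (c : ℝ) (x : ℝ × ℝ × ℝ) (y : ℝ × ℝ) : ℝ :=
  8 * c * (x.2.1 - y.1) * (x.2.2 - y.2 + (1 / 2) * y.1 * x.1) * Dden x y ^ (-(3 : ℝ) / 2)

/-- The homogeneous distance `d̃` on the vertical plane `Π ≅ ℝ²`. -/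
def dt (a b : ℝ × ℝ) : ℝ := ((a.1 - b.1) ^ 4 + 16 * (a.2 - b.2) ^ 2) ^ ((1 : ℝ) / 4)

/-- The ball of `d̃` of radius `r` centered at `a`. -/
def bhat (r : ℝ) (a : ℝ × ℝ) : Set (ℝ × ℝ) := {b | dt a b < r}

/-- The boundary convolution kernel `k(v̂) = 8c v₂ v₃ (v₂⁴ + 16 v₃²)^{-3/2}` on `Π`. -/
def kconv (c : ℝ) (v : ℝ × ℝ) : ℝ :=
  8 * c * v.1 * v.2 * (v.1 ^ 4 + 16 * v.2 ^ 2) ^ (-(3 : ℝ) / 2)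

lemma Dpos (x0 y : ℝ × ℝ) (hy : y ≠ x0) :
    0 < (x0.1 - y.1) ^ 4 + 16 * (x0.2 - y.2) ^ 2 := by
  set u : ℝ := x0.1 - y.1 with hu
  set w : ℝ := x0.2 - y.2 with hw
  rcases lt_or_ge 0 (u ^ 4 + 16 * w ^ 2) with h | h
  · exact h
  · exfalso
    have hu4 : (0:ℝ) ≤ u ^ 4 := by positivity
    have hw2 : (0:ℝ) ≤ w ^ 2 := sq_nonneg w
    have h1 : u = 0 := by
      have : u ^ 4 = 0 := le_antisymm (by linarith) hu4
      exact pow_eq_zero_iff (by norm_num) |>.mp this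
    have h2 : w = 0 := by
      have : w ^ 2 = 0 := le_antisymm (by nlinarith) hw2
      exact pow_eq_zero_iff (by norm_num) |>.mp this
    exact hy (Prod.ext (by simp [hu] at h1; linarith) (by simp [hw] at h2; linarith))

lemma dt_self (x0 : ℝ × ℝ) : dt x0 x0 = 0 := by
  simp [dt, Real.zero_rpow]

lemma dt_pos (x0 y : ℝ × ℝ) (hy : y ≠ x0) : 0 < dt x0 y := by
  have := Dpos x0 y hy
  unfold dt
  positivity

lemma kbound (c : ℝ) (hc : 0 < c) (β : ℝ) (x0 y : ℝ × ℝ) (hy : y ≠ x0) :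
    |kconv c (x0 - y)| * dt x0 y ^ β ≤ 2 * c * dt x0 y ^ (β - 3) := by
  set u : ℝ := x0.1 - y.1 with hu
  set w : ℝ := x0.2 - y.2 with hw
  set D : ℝ := u ^ 4 + 16 * w ^ 2 with hDdef
  have hD : 0 < D := Dpos x0 y hy
  have hd : dt x0 y = D ^ ((1:ℝ)/4) := rfl
  have hdpos : 0 < dt x0 y := by rw [hd]; positivity
  have hk : |kconv c (x0 - y)| = 8 * c * |u| * |w| * D ^ (-(3:ℝ)/2) := by
    have h1 : (x0 - y).1 = u := rfl
    have h2 : (x0 - y).2 = w := rfl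
    rw [kconv, h1, h2, ← hDdef]
    rw [abs_mul, abs_mul, abs_mul]
    rw [abs_of_nonneg (by positivity : (0:ℝ) ≤ D ^ (-(3:ℝ)/2)),
      abs_of_nonneg (by linarith : (0:ℝ) ≤ 8 * c)]
  have key : 4 * (|u| * |w|) ≤ D ^ ((3:ℝ)/4) := by
    have h4 : (4 * (|u| * |w|)) ^ (4:ℕ) ≤ (D ^ ((3:ℝ)/4)) ^ (4:ℕ) := by
      have heq : (D ^ ((3:ℝ)/4)) ^ (4:ℕ) = D ^ (3:ℕ) := by
        rw [← Real.rpow_natCast (D ^ ((3:ℝ)/4)) 4, ← Real.rpow_mul hD.le,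
          ← Real.rpow_natCast D 3]
        norm_num
      rw [heq]
      have hu2 : |u| ^ 4 = u ^ 4 := by rw [← abs_pow, abs_of_nonneg (by positivity)]
      have hw4 : |w| ^ 4 = (w ^ 2) ^ 2 := by
        rw [← abs_pow]; rw [abs_of_nonneg (by positivity : (0:ℝ) ≤ w ^ 4)]; ring
      have expand : (4 * (|u| * |w|)) ^ (4:ℕ) = 256 * (u ^ 4 * (w ^ 2) ^ 2) := by
        rw [mul_pow, mul_pow, hu2, hw4]; norm_num
      rw [expand, hDdef]
      have hA : (0:ℝ) ≤ u ^ 4 := by positivity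
      have hB : (0:ℝ) ≤ w ^ 2 := sq_nonneg w
      nlinarith [mul_nonneg (mul_nonneg hA hA) hA, mul_nonneg (mul_nonneg hA hA) hB,
        mul_nonneg (mul_nonneg hA hB) hB, mul_nonneg (mul_nonneg hB hB) hB]
    exact le_of_pow_le_pow_left₀ (by norm_num) (by positivity) h4
  have hcomb : 8 * c * |u| * |w| * D ^ (-(3:ℝ)/2) ≤ 2 * c * (dt x0 y) ^ (-(3:ℝ)) := by
    have hdm : (dt x0 y) ^ (-(3:ℝ)) = D ^ (-(3:ℝ)/4) := by
      rw [hd, ← Real.rpow_mul hD.le]; norm_num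
    rw [hdm]
    have hDm : D ^ (-(3:ℝ)/4) = D ^ ((3:ℝ)/4) * D ^ (-(3:ℝ)/2) := by
      rw [← Real.rpow_add hD]; norm_num
    rw [hDm]
    have hDp : (0:ℝ) < D ^ (-(3:ℝ)/2) := by positivity
    calc 8 * c * |u| * |w| * D ^ (-(3:ℝ)/2)
        = 2 * c * (4 * (|u| * |w|)) * D ^ (-(3:ℝ)/2) := by ring
      _ ≤ 2 * c * D ^ ((3:ℝ)/4) * D ^ (-(3:ℝ)/2) := by
          apply mul_le_mul_of_nonneg_right _ hDp.le
          apply mul_le_mul_of_nonneg_left key (by linarith)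
      _ = 2 * c * (D ^ ((3:ℝ)/4) * D ^ (-(3:ℝ)/2)) := by ring
  calc |kconv c (x0 - y)| * dt x0 y ^ β
      ≤ 2 * c * (dt x0 y) ^ (-(3:ℝ)) * dt x0 y ^ β := by
        apply mul_le_mul_of_nonneg_right _ (Real.rpow_nonneg hdpos.le β)
        rw [hk]; exact hcomb
    _ = 2 * c * dt x0 y ^ (β - 3) := by
        rw [mul_assoc, ← Real.rpow_add hdpos]; ring_nf

lemma ball_subset_rect (x0 : ℝ × ℝ) (ρ : ℝ) (hρ : 0 < ρ) :
    {y : ℝ × ℝ | dt x0 y < ρ} ⊆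
      (Set.Ioo (x0.1 - ρ) (x0.1 + ρ)) ×ˢ (Set.Ioo (x0.2 - ρ^2/4) (x0.2 + ρ^2/4)) := by
  intro y hy
  simp only [Set.mem_setOf_eq] at hy
  set u : ℝ := x0.1 - y.1 with hu
  set w : ℝ := x0.2 - y.2 with hw
  have hD : (0:ℝ) ≤ u ^ 4 + 16 * w ^ 2 := by positivity
  have hd4 : u ^ 4 + 16 * w ^ 2 < ρ ^ 4 := by
    have h1 : dt x0 y ^ (4:ℕ) < ρ ^ (4:ℕ) :=
      pow_lt_pow_left₀ hy (Real.rpow_nonneg hD (1/4)) (by norm_num)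
    have h2 : dt x0 y ^ (4:ℕ) = u ^ 4 + 16 * w ^ 2 := by
      rw [dt, ← hu, ← hw, ← Real.rpow_natCast (_ ^ ((1:ℝ)/4)) 4, ← Real.rpow_mul hD]
      norm_num
    rwa [h2] at h1
  have hu' : |u| < ρ := by
    have : |u| ^ 4 < ρ ^ 4 := by
      rw [← abs_pow, abs_of_nonneg (by positivity : (0:ℝ) ≤ u ^ 4)]
      nlinarith [sq_nonneg w]
    exact lt_of_pow_lt_pow_left₀ 4 hρ.le this
  have hw' : |w| < ρ ^ 2 / 4 := by
    have : (4 * |w|) ^ 2 < (ρ ^ 2) ^ 2 := by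
      rw [mul_pow, sq_abs]
      nlinarith [pow_le_pow_left₀ (abs_nonneg u) (le_of_lt hu') 4, sq_nonneg u,
        pow_nonneg (abs_nonneg u) 4]
    have h4 : 4 * |w| < ρ ^ 2 :=
      lt_of_pow_lt_pow_left₀ 2 (by positivity) this
    linarith
  constructor
  · simp only [Set.mem_Ioo]
    rw [abs_lt] at hu'
    constructor <;> simp [hu] at hu' ⊢ <;> linarith [hu'.1, hu'.2]
  · simp only [Set.mem_Ioo]
    rw [abs_lt] at hw'
    constructor <;> simp [hw] at hw' ⊢ <;> linarith [hw'.1, hw'.2]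

lemma meas_ball_le (x0 : ℝ × ℝ) (ρ : ℝ) (hρ : 0 < ρ) :
    volume {y : ℝ × ℝ | dt x0 y < ρ} ≤ ENNReal.ofReal (ρ ^ 3) := by
  calc volume {y : ℝ × ℝ | dt x0 y < ρ}
      ≤ volume ((Set.Ioo (x0.1 - ρ) (x0.1 + ρ)) ×ˢ
          (Set.Ioo (x0.2 - ρ^2/4) (x0.2 + ρ^2/4))) :=
        measure_mono (ball_subset_rect x0 ρ hρ)
    _ = volume (Set.Ioo (x0.1 - ρ) (x0.1 + ρ)) *
          volume (Set.Ioo (x0.2 - ρ^2/4) (x0.2 + ρ^2/4)) := by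
        rw [MeasureTheory.Measure.volume_eq_prod, Measure.prod_prod]
    _ = ENNReal.ofReal (2 * ρ) * ENNReal.ofReal (ρ ^ 2 / 2) := by
        rw [Real.volume_Ioo, Real.volume_Ioo]; ring_nf
    _ = ENNReal.ofReal (ρ ^ 3) := by
        rw [← ENNReal.ofReal_mul (by linarith)]; ring_nf

lemma dt_measurable (x0 : ℝ × ℝ) : Measurable (fun y => dt x0 y) := by
  unfold dt
  fun_prop

/-- Uniform integral bounds for the boundary kernel against powers
of the homogeneous distance on homogeneous balls. -/
theorem stmt8 (c : ℝ) (hc : 0 < c) (j : ℕ) (α : ℝ) (hα0 : 0 ≤ α) (hα1 : α < 1)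
    (hjα : 0 < (j : ℝ) + α) :
    ∃ C > (0 : ℝ), ∀ x0 : ℝ × ℝ, ∀ r > (0 : ℝ),
      ∫⁻ y in bhat r x0, ENNReal.ofReal (|kconv c (x0 - y)| * dt x0 y ^ ((j : ℝ) + α)) ≤
        ENNReal.ofReal (C * r ^ ((j : ℝ) + α)) := by
  classical
  set β : ℝ := (j : ℝ) + α with hβdef
  have hβ : 0 < β := hjα
  set q : ℝ := (2:ℝ) ^ (-β) with hqdef
  have hq0 : 0 < q := Real.rpow_pos_of_pos two_pos _
  have hq1 : q < 1 := Real.rpow_lt_one_of_one_lt_of_neg one_lt_two (by linarith)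
  have h1q : 0 < 1 - q := by linarith
  refine ⟨16 * c * (1 - q)⁻¹, by positivity, ?_⟩
  intro x0 r hr
  set f : (ℝ × ℝ) → ENNReal :=
    fun y => ENNReal.ofReal (|kconv c (x0 - y)| * dt x0 y ^ β) with hf
  set A : ℕ → Set (ℝ × ℝ) :=
    fun n => {y | dt x0 y < r / 2 ^ n ∧ r / 2 ^ (n + 1) ≤ dt x0 y} with hA
  -- covering
  have hcover : bhat r x0 ⊆ {x0} ∪ ⋃ n, A n := by
    intro y hy
    by_cases hyx : y = x0
    · exact Or.inl (by simp [hyx])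
    · right
      have hd : 0 < dt x0 y := dt_pos x0 y hyx
      have hex : ∃ n : ℕ, r / 2 ^ (n + 1) ≤ dt x0 y := by
        obtain ⟨n, hn⟩ := pow_unbounded_of_one_lt (r / dt x0 y) (one_lt_two (α := ℝ))
        refine ⟨n, ?_⟩
        rw [div_le_iff₀ (by positivity)]
        rw [div_lt_iff₀ hd] at hn
        have h2 : (2:ℝ) ^ n ≤ 2 ^ (n + 1) := by
          apply pow_le_pow_right₀ (by norm_num) (by omega)
        nlinarith
      set N := Nat.find hex with hN
      have hge : r / 2 ^ (N + 1) ≤ dt x0 y := Nat.find_spec hex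
      have hlt : dt x0 y < r / 2 ^ N := by
        rcases Nat.eq_zero_or_pos N with h0 | hpos
        · rw [h0]; simpa [bhat] using hy
        · have := Nat.find_min hex (m := N - 1) (by omega)
          push_neg at this
          have hNe : N - 1 + 1 = N := by omega
          rwa [hNe] at this
      exact Set.mem_iUnion.mpr ⟨N, ⟨hlt, hge⟩⟩
  -- per-annulus bound
  have hterm : ∀ n : ℕ, ∫⁻ y in A n, f y ≤
      ENNReal.ofReal (16 * c * r ^ β) * (ENNReal.ofReal q) ^ n := by
    intro n
    set ρ : ℝ := r / 2 ^ n with hρdef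
    have hρ : 0 < ρ := by positivity
    have hhalf : r / 2 ^ (n + 1) = ρ / 2 := by
      rw [hρdef, pow_succ]; ring
    have hmeasA : MeasurableSet (A n) := by
      have : A n = (fun y => dt x0 y) ⁻¹' Set.Ico (r / 2 ^ (n + 1)) ρ := by
        ext y; simp [hA, Set.mem_Ico, and_comm, hρdef]
      rw [this]
      exact (dt_measurable x0) measurableSet_Ico
    -- pointwise bound on A n
    have hpt : ∀ y ∈ A n, f y ≤ ENNReal.ofReal (16 * c * ρ ^ (β - 3)) := by
      intro y hy
      obtain ⟨hlt, hge⟩ := hy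
      rw [hhalf] at hge
      have hyx : y ≠ x0 := by
        intro h
        rw [h, dt_self] at hge
        nlinarith
      have hd : 0 < dt x0 y := dt_pos x0 y hyx
      have h1 : |kconv c (x0 - y)| * dt x0 y ^ β ≤ 2 * c * dt x0 y ^ (β - 3) :=
        kbound c hc β x0 y hyx
      have h2 : dt x0 y ^ (β - 3) ≤ 8 * ρ ^ (β - 3) := by
        have hsplit : dt x0 y ^ (β - 3) = dt x0 y ^ β * dt x0 y ^ (-(3:ℝ)) := by
          rw [← Real.rpow_add hd]; ring_nf
        have hb : dt x0 y ^ β ≤ ρ ^ β :=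
          Real.rpow_le_rpow hd.le hlt.le hβ.le
        have hm : dt x0 y ^ (-(3:ℝ)) ≤ (ρ / 2) ^ (-(3:ℝ)) :=
          Real.rpow_le_rpow_of_nonpos (by positivity) hge (by norm_num)
        have hval : (ρ / 2) ^ (-(3:ℝ)) = 8 * ρ ^ (-(3:ℝ)) := by
          rw [Real.div_rpow hρ.le (by norm_num : (0:ℝ) ≤ 2)]
          have h2r : (2:ℝ) ^ (-(3:ℝ)) = 1 / 8 := by
            rw [show (-(3:ℝ)) = ((-3:ℤ):ℝ) by norm_num, Real.rpow_intCast]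
            norm_num
          rw [div_eq_mul_inv, h2r]
          field_simp
        have hcombine : dt x0 y ^ β * dt x0 y ^ (-(3:ℝ)) ≤ ρ ^ β * (8 * ρ ^ (-(3:ℝ))) := by
          rw [← hval]
          apply mul_le_mul hb hm (Real.rpow_nonneg hd.le _) (Real.rpow_nonneg hρ.le _)
        rw [hsplit]
        calc dt x0 y ^ β * dt x0 y ^ (-(3:ℝ)) ≤ ρ ^ β * (8 * ρ ^ (-(3:ℝ))) := hcombine
          _ = 8 * (ρ ^ β * ρ ^ (-(3:ℝ))) := by ring
          _ = 8 * ρ ^ (β - 3) := by rw [← Real.rpow_add hρ]; ring_nf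
      apply ENNReal.ofReal_le_ofReal
      calc |kconv c (x0 - y)| * dt x0 y ^ β ≤ 2 * c * dt x0 y ^ (β - 3) := h1
        _ ≤ 2 * c * (8 * ρ ^ (β - 3)) := by
            apply mul_le_mul_of_nonneg_left h2 (by linarith)
        _ = 16 * c * ρ ^ (β - 3) := by ring
    have hAsub : A n ⊆ {y : ℝ × ℝ | dt x0 y < ρ} := fun y hy => hy.1
    calc ∫⁻ y in A n, f y
        ≤ ∫⁻ _ in A n, ENNReal.ofReal (16 * c * ρ ^ (β - 3)) :=
          setLIntegral_mono' hmeasA hpt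
      _ = ENNReal.ofReal (16 * c * ρ ^ (β - 3)) * volume (A n) :=
          setLIntegral_const _ _
      _ ≤ ENNReal.ofReal (16 * c * ρ ^ (β - 3)) * ENNReal.ofReal (ρ ^ 3) := by
          apply mul_le_mul_right
          exact le_trans (measure_mono hAsub) (meas_ball_le x0 ρ hρ)
      _ = ENNReal.ofReal (16 * c * ρ ^ β) := by
          rw [← ENNReal.ofReal_mul (by positivity)]
          congr 1
          have : ρ ^ (3:ℕ) = ρ ^ ((3:ℕ):ℝ) := (Real.rpow_natCast ρ 3).symm
          rw [mul_assoc, this, ← Real.rpow_add hρ]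
          norm_num
      _ = ENNReal.ofReal (16 * c * r ^ β) * (ENNReal.ofReal q) ^ n := by
          have hρβ : ρ ^ β = r ^ β * q ^ n := by
            rw [hρdef, Real.div_rpow hr.le (by positivity)]
            have h2n : ((2:ℝ) ^ n) ^ β = ((2:ℝ) ^ β) ^ n := by
              rw [← Real.rpow_natCast (2:ℝ) n, ← Real.rpow_natCast ((2:ℝ) ^ β) n,
                ← Real.rpow_mul (by norm_num : (0:ℝ) ≤ 2),
                ← Real.rpow_mul (by norm_num : (0:ℝ) ≤ 2), mul_comm]
            have hqn : q ^ n = (((2:ℝ) ^ β) ^ n)⁻¹ := by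
              rw [hqdef, Real.rpow_neg (by norm_num), inv_pow]
            rw [h2n, hqn, div_eq_mul_inv]
          rw [hρβ, ← ENNReal.ofReal_pow hq0.le, ← ENNReal.ofReal_mul (by positivity)]
          congr 1
          ring
  -- singleton has measure zero
  have hsing : ∫⁻ y in ({x0} : Set (ℝ × ℝ)), f y = 0 :=
    setLIntegral_measure_zero _ _ (measure_singleton x0)
  -- put it together
  calc ∫⁻ y in bhat r x0, f y
      ≤ ∫⁻ y in ({x0} ∪ ⋃ n, A n : Set (ℝ × ℝ)), f y := lintegral_mono_set hcover
    _ ≤ (∫⁻ y in ({x0} : Set (ℝ × ℝ)), f y) + ∫⁻ y in (⋃ n, A n), f y :=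
        lintegral_union_le _ _ _
    _ = ∫⁻ y in (⋃ n, A n), f y := by rw [hsing, zero_add]
    _ ≤ ∑' n, ∫⁻ y in A n, f y := lintegral_iUnion_le _ _
    _ ≤ ∑' n, ENNReal.ofReal (16 * c * r ^ β) * (ENNReal.ofReal q) ^ n :=
        ENNReal.tsum_le_tsum hterm
    _ = ENNReal.ofReal (16 * c * r ^ β) * ∑' n, (ENNReal.ofReal q) ^ n :=
        ENNReal.tsum_mul_left
    _ = ENNReal.ofReal (16 * c * r ^ β) * (1 - ENNReal.ofReal q)⁻¹ := by
        rw [ENNReal.tsum_geometric]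
    _ = ENNReal.ofReal (16 * c * (1 - q)⁻¹ * r ^ β) := by
        rw [← ENNReal.ofReal_one, ← ENNReal.ofReal_sub _ hq0.le,
          ← ENNReal.ofReal_inv_of_pos h1q, ← ENNReal.ofReal_mul (by positivity)]
        congr 1
        ring
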